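/- Let p and q be distinct primes. Let a₁,…,a_{p−1} and b₁,…,b_{q−1} be nonnegative integers (Dynkin indices), and set r_p = Σ_{j=1}^{p−1} j·a_j and r_q = Σ_{j=1}^{q−1} j·b_j. Let λ be an integer with λ ≡ r_p (mod p) and λ ≡ r_q (mod q). Let d_p and d_q be the natural numbers determined by the Weyl dimension formula, i.e., d_p · ∏_{l=0}^{p−1} l! = ∏_{0≤u<v≤p−1} (Σ_{j=u+1}^{v} (a_j + 1)) and d_q · ∏_{l=0}^{q−1} l! = ∏_{0≤u<v≤q−1} (Σ_{j=u+1}^{v} (b_j + 1)). Then p·q divides d_p · d_q · λ. -/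
import Mathlib


open Finset

lemma key_dvd (p : ℕ) (hp : p.Prime) (a : ℕ → ℕ) (dp : ℕ)
    (hdp : dp * ∏ l ∈ range p, Nat.factorial l =
      ∏ v ∈ range p, ∏ u ∈ range v, ∑ j ∈ Icc (u + 1) v, (a j + 1)) :
    p ∣ dp * ∑ j ∈ Icc 1 (p - 1), j * a j := by
  haveI : Fact p.Prime := ⟨hp⟩
  rw [← ZMod.natCast_eq_zero_iff]
  set X : ℕ → ZMod p := fun k => ((∑ j ∈ Icc 1 k, (a j + 1) : ℕ) : ZMod p) with hX
  have hcast : ∀ u v : ℕ, u ≤ v →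
      ((∑ j ∈ Icc (u + 1) v, (a j + 1) : ℕ) : ZMod p) = X v - X u := by
    intro u v huv
    have h0 : ∀ k : ℕ, Icc 1 k = Ioc 0 k := by intro k; rfl
    have h1 := Finset.sum_Ioc_consecutive (fun j => (a j + 1)) (Nat.zero_le u) huv
    have h2 : (∑ j ∈ Icc 1 u, (a j + 1)) + ∑ j ∈ Icc (u+1) v, (a j + 1)
        = ∑ j ∈ Icc 1 v, (a j + 1) := by
      rw [h0, h0]
      simpa [Finset.Icc_add_one_left_eq_Ioc] using h1
    simp only [hX]
    rw [← h2]
    push_cast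
    ring
  by_cases hinj : ∀ u ∈ range p, ∀ v ∈ range p, X u = X v → u = v
  · -- injective case: show r ≡ 0 mod p
    have hcastinj : ∀ x ∈ range p, ∀ y ∈ range p, (x : ZMod p) = (y : ZMod p) → x = y := by
      intro x hx y hy hxy
      have := congrArg ZMod.val hxy
      rwa [ZMod.val_natCast_of_lt (mem_range.mp hx),
        ZMod.val_natCast_of_lt (mem_range.mp hy)] at this
    have himg : (range p).image X = (univ : Finset (ZMod p)) := by
      apply Finset.eq_univ_of_card
      rw [Finset.card_image_of_injOn hinj, Finset.card_range, ZMod.card]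
    have himg2 : (range p).image (fun k : ℕ => (k : ZMod p)) = (univ : Finset (ZMod p)) := by
      apply Finset.eq_univ_of_card
      rw [Finset.card_image_of_injOn hcastinj, Finset.card_range, ZMod.card]
    have hsum1 : ∑ k ∈ range p, X k = ∑ z : ZMod p, z := by
      rw [← himg, Finset.sum_image hinj]
    have hsum2 : ∑ k ∈ range p, (k : ZMod p) = ∑ z : ZMod p, z := by
      rw [← himg2, Finset.sum_image hcastinj]
    have hXsplit : ∑ k ∈ range p, X k
        = ∑ k ∈ range p, (k : ZMod p) + ∑ k ∈ range p, ∑ j ∈ Icc 1 k, (a j : ZMod p) := by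
      rw [← Finset.sum_add_distrib]
      apply Finset.sum_congr rfl
      intro k _
      simp only [hX]
      push_cast
      rw [Finset.sum_add_distrib]
      simp [Nat.card_Icc, add_comm]
    have hA : ∑ k ∈ range p, ∑ j ∈ Icc 1 k, (a j : ZMod p) = 0 := by
      have h3 := hsum1.trans hsum2.symm
      rw [hXsplit] at h3
      linear_combination h3
    have hswap : ∑ k ∈ range p, ∑ j ∈ Icc 1 k, (a j : ZMod p)
        = ∑ j ∈ Icc 1 (p - 1), ∑ k ∈ Icc j (p - 1), (a j : ZMod p) := by
      apply Finset.sum_comm'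
      intro k j
      have hp1 : 1 ≤ p := hp.one_lt.le
      simp only [mem_range, mem_Icc]
      omega
    have hr : ((∑ j ∈ Icc 1 (p - 1), j * a j : ℕ) : ZMod p) = 0 := by
      push_cast
      have hterm : ∀ j ∈ Icc 1 (p - 1), ∑ k ∈ Icc j (p - 1), (a j : ZMod p)
          = - ((j : ZMod p) * (a j : ZMod p)) := by
        intro j hj
        rw [mem_Icc] at hj
        have hc : ((p - 1 + 1 - j : ℕ) : ZMod p) = -(j : ZMod p) := by
          have h1 : (p - 1 + 1 - j : ℕ) + j = p := by
            have := hp.one_lt; omega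
          have h4 := congrArg (fun n : ℕ => (n : ZMod p)) h1
          push_cast at h4
          rw [ZMod.natCast_self] at h4
          linear_combination h4
        rw [Finset.sum_const, Nat.card_Icc, nsmul_eq_mul, hc]
        ring
      rw [Finset.sum_congr rfl hterm] at hswap
      rw [hswap, Finset.sum_neg_distrib, neg_eq_zero] at hA
      exact hA
    rw [Nat.cast_mul, hr, mul_zero]
  · -- non-injective: dp = 0 in ZMod p
    push_neg at hinj
    obtain ⟨u, hu, v, hv, hXuv, huv⟩ := hinj
    wlog hlt : u < v generalizing u v
    · exact this v hv u hu hXuv.symm (Ne.symm huv) (by omega)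
    have hN : ((∏ v ∈ range p, ∏ u ∈ range v, ∑ j ∈ Icc (u + 1) v, (a j + 1) : ℕ) : ZMod p)
        = 0 := by
      rw [Nat.cast_prod]
      apply Finset.prod_eq_zero hv
      rw [Nat.cast_prod]
      apply Finset.prod_eq_zero (mem_range.mpr hlt)
      rw [hcast u v hlt.le, hXuv, sub_self]
    have hF : ((∏ l ∈ range p, Nat.factorial l : ℕ) : ZMod p) ≠ 0 := by
      rw [Nat.cast_prod]
      apply Finset.prod_ne_zero_iff.mpr
      intro l hl
      rw [Ne, ZMod.natCast_eq_zero_iff, hp.dvd_factorial]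
      exact fun h => absurd (mem_range.mp hl) (by omega)
    have hdp' : (dp : ZMod p) = 0 := by
      have h5 := congrArg (fun n : ℕ => (n : ZMod p)) hdp
      simp only [Nat.cast_mul] at h5
      rw [hN] at h5
      rcases mul_eq_zero.mp h5 with h | h
      · exact h
      · exact absurd h hF
    rw [Nat.cast_mul, hdp', zero_mul]

lemma prime_dvd_part (p : ℕ) (hp : p.Prime) (a : ℕ → ℕ) (lam : ℤ) (dp : ℕ)
    (hdp : dp * ∏ l ∈ range p, Nat.factorial l =
      ∏ v ∈ range p, ∏ u ∈ range v, ∑ j ∈ Icc (u + 1) v, (a j + 1))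
    (hlamp : lam ≡ ((∑ j ∈ Icc 1 (p - 1), j * a j : ℕ) : ℤ) [ZMOD (p : ℤ)]) :
    (p : ℤ) ∣ (dp : ℤ) * lam := by
  set r : ℕ := ∑ j ∈ Icc 1 (p - 1), j * a j with hr
  have h1 : (p : ℤ) ∣ ((r : ℤ) - lam) := hlamp.dvd
  have h2 : (p : ℤ) ∣ (dp : ℤ) * r := by
    have := key_dvd p hp a dp hdp
    exact_mod_cast Int.natCast_dvd_natCast.mpr this
  have : (dp : ℤ) * lam = (dp : ℤ) * r - (dp : ℤ) * ((r : ℤ) - lam) := by ring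
  rw [this]
  exact dvd_sub h2 (Dvd.dvd.mul_left h1 _)


/-- **Theorem 4.4 (teilerdim).**
Let `p`, `q` be distinct primes. For an irreducible representation of `G_SM(p,q)` with
Dynkin indices `a₁,…,a_{p-1}` and `b₁,…,b_{q-1}`, sizes `r_p = ∑ j·a_j`, `r_q = ∑ j·b_j`,
dimensions `d_p`, `d_q` (given by the Weyl dimension formula) and winding number `λ`
satisfying the integrability conditions `λ ≡ r_p (mod p)` and `λ ≡ r_q (mod q)`, one has
`p·q ∣ d_p·d_q·λ`. -/
theorem pq_divides_dim_mul_winding (p q : ℕ) (hp : p.Prime) (hq : q.Prime) (hpq : p ≠ q)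
    (a b : ℕ → ℕ) (lam : ℤ) (dp dq : ℕ)
    (hdp : dp * ∏ l ∈ range p, Nat.factorial l =
      ∏ v ∈ range p, ∏ u ∈ range v, ∑ j ∈ Icc (u + 1) v, (a j + 1))
    (hdq : dq * ∏ l ∈ range q, Nat.factorial l =
      ∏ v ∈ range q, ∏ u ∈ range v, ∑ j ∈ Icc (u + 1) v, (b j + 1))
    (hlamp : lam ≡ ((∑ j ∈ Icc 1 (p - 1), j * a j : ℕ) : ℤ) [ZMOD (p : ℤ)])
    (hlamq : lam ≡ ((∑ j ∈ Icc 1 (q - 1), j * b j : ℕ) : ℤ) [ZMOD (q : ℤ)]) :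
    ((p : ℤ) * q) ∣ (dp : ℤ) * dq * lam := by
  have h1 : (p : ℤ) ∣ (dp : ℤ) * dq * lam := by
    have heq : (dp : ℤ) * dq * lam = (dq : ℤ) * ((dp : ℤ) * lam) := by ring
    rw [heq]
    exact Dvd.dvd.mul_left (prime_dvd_part p hp a lam dp hdp hlamp) _
  have h2 : (q : ℤ) ∣ (dp : ℤ) * dq * lam := by
    have heq : (dp : ℤ) * dq * lam = (dp : ℤ) * ((dq : ℤ) * lam) := by ring
    rw [heq]
    exact Dvd.dvd.mul_left (prime_dvd_part q hq b lam dq hdq hlamq) _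
  have hco : IsCoprime (p : ℤ) (q : ℤ) := by
    rw [Int.isCoprime_iff_gcd_eq_one]
    exact_mod_cast (Nat.coprime_primes hp hq).mpr hpq
  exact hco.mul_dvd h1 h2
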